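/- arXiv:1003.5087 — 2 statements merged into one kernel-verified Lean document; each statement's English description precedes it below -/
import Mathlib

section
/- The set of compact metric spaces containing a 4-point subspace with strictly negative Cayley–Menger determinant is open and dense in the Gromov-Hausdorff space; consequently, a generic compact metric space cannot be isometrically embedded into any Hilbert space. -/
open GromovHausdorff

/-- The Cayley–Menger determinant of a quadruple of points with pairwise distances `d i j`. -/
noncomputable def cayleyMenger (d : Fin 4 → Fin 4 → ℝ) : ℝ :=
  (1 / 288) * Matrix.det
    !![0, 1, 1, 1, 1;
       1, 0, (d 0 1) ^ 2, (d 0 2) ^ 2, (d 0 3) ^ 2;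
       1, (d 1 0) ^ 2, 0, (d 1 2) ^ 2, (d 1 3) ^ 2;
       1, (d 2 0) ^ 2, (d 2 1) ^ 2, 0, (d 2 3) ^ 2;
       1, (d 3 0) ^ 2, (d 3 1) ^ 2, (d 3 2) ^ 2, 0]

set_option maxHeartbeats 2000000 in
lemma cayleyMenger_eq (d : Fin 4 → Fin 4 → ℝ) : cayleyMenger d = (1 / 288) *
    ((-1) * (d 1 3 ^ 2) * (d 2 1 ^ 2) * (d 3 2 ^ 2) +
      (1) * (d 1 3 ^ 2) * (d 2 1 ^ 2) * (d 3 0 ^ 2) +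
      (1) * (d 1 3 ^ 2) * (d 2 0 ^ 2) * (d 3 2 ^ 2) +
      (-1) * (d 1 3 ^ 2) * (d 2 0 ^ 2) * (d 3 1 ^ 2) +
      (-1) * (d 1 2 ^ 2) * (d 2 3 ^ 2) * (d 3 1 ^ 2) +
      (1) * (d 1 2 ^ 2) * (d 2 3 ^ 2) * (d 3 0 ^ 2) +
      (-1) * (d 1 2 ^ 2) * (d 2 1 ^ 2) * (d 3 0 ^ 2) +
      (1) * (d 1 2 ^ 2) * (d 2 0 ^ 2) * (d 3 1 ^ 2) +
      (-1) * (d 1 0 ^ 2) * (d 2 3 ^ 2) * (d 3 2 ^ 2) +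
      (1) * (d 1 0 ^ 2) * (d 2 3 ^ 2) * (d 3 1 ^ 2) +
      (1) * (d 1 0 ^ 2) * (d 2 1 ^ 2) * (d 3 2 ^ 2) +
      (1) * (d 0 3 ^ 2) * (d 2 1 ^ 2) * (d 3 2 ^ 2) +
      (-1) * (d 0 3 ^ 2) * (d 2 1 ^ 2) * (d 3 0 ^ 2) +
      (-1) * (d 0 3 ^ 2) * (d 2 0 ^ 2) * (d 3 2 ^ 2) +
      (1) * (d 0 3 ^ 2) * (d 2 0 ^ 2) * (d 3 1 ^ 2) +
      (1) * (d 0 3 ^ 2) * (d 1 2 ^ 2) * (d 3 1 ^ 2) +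
      (-1) * (d 0 3 ^ 2) * (d 1 2 ^ 2) * (d 3 0 ^ 2) +
      (-1) * (d 0 3 ^ 2) * (d 1 2 ^ 2) * (d 2 1 ^ 2) +
      (1) * (d 0 3 ^ 2) * (d 1 2 ^ 2) * (d 2 0 ^ 2) +
      (1) * (d 0 3 ^ 2) * (d 1 0 ^ 2) * (d 3 2 ^ 2) +
      (-1) * (d 0 3 ^ 2) * (d 1 0 ^ 2) * (d 3 1 ^ 2) +
      (1) * (d 0 3 ^ 2) * (d 1 0 ^ 2) * (d 2 1 ^ 2) +
      (1) * (d 0 2 ^ 2) * (d 2 3 ^ 2) * (d 3 1 ^ 2) +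
      (-1) * (d 0 2 ^ 2) * (d 2 3 ^ 2) * (d 3 0 ^ 2) +
      (1) * (d 0 2 ^ 2) * (d 2 1 ^ 2) * (d 3 0 ^ 2) +
      (-1) * (d 0 2 ^ 2) * (d 2 0 ^ 2) * (d 3 1 ^ 2) +
      (-1) * (d 0 2 ^ 2) * (d 1 3 ^ 2) * (d 3 1 ^ 2) +
      (1) * (d 0 2 ^ 2) * (d 1 3 ^ 2) * (d 3 0 ^ 2) +
      (1) * (d 0 2 ^ 2) * (d 1 3 ^ 2) * (d 2 1 ^ 2) +
      (-1) * (d 0 2 ^ 2) * (d 1 3 ^ 2) * (d 2 0 ^ 2) +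
      (1) * (d 0 2 ^ 2) * (d 1 0 ^ 2) * (d 3 1 ^ 2) +
      (1) * (d 0 2 ^ 2) * (d 1 0 ^ 2) * (d 2 3 ^ 2) +
      (-1) * (d 0 2 ^ 2) * (d 1 0 ^ 2) * (d 2 1 ^ 2) +
      (-1) * (d 0 1 ^ 2) * (d 2 3 ^ 2) * (d 3 2 ^ 2) +
      (1) * (d 0 1 ^ 2) * (d 2 3 ^ 2) * (d 3 0 ^ 2) +
      (1) * (d 0 1 ^ 2) * (d 2 0 ^ 2) * (d 3 2 ^ 2) +
      (1) * (d 0 1 ^ 2) * (d 1 3 ^ 2) * (d 3 2 ^ 2) +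
      (-1) * (d 0 1 ^ 2) * (d 1 3 ^ 2) * (d 3 0 ^ 2) +
      (1) * (d 0 1 ^ 2) * (d 1 3 ^ 2) * (d 2 0 ^ 2) +
      (1) * (d 0 1 ^ 2) * (d 1 2 ^ 2) * (d 3 0 ^ 2) +
      (1) * (d 0 1 ^ 2) * (d 1 2 ^ 2) * (d 2 3 ^ 2) +
      (-1) * (d 0 1 ^ 2) * (d 1 2 ^ 2) * (d 2 0 ^ 2) +
      (-1) * (d 0 1 ^ 2) * (d 1 0 ^ 2) * (d 3 2 ^ 2) +
      (-1) * (d 0 1 ^ 2) * (d 1 0 ^ 2) * (d 2 3 ^ 2)) := by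
  rw [cayleyMenger]
  simp [Matrix.det_succ_row_zero, Fin.sum_univ_succ, Fin.succAbove_zero, Fin.succ_succAbove_zero,
    Fin.succ_succAbove_succ, Fin.succ_succAbove_one]
  simp +decide [Fin.succAbove]
  ring

lemma continuous_cayleyMenger : Continuous cayleyMenger := by
  have h : cayleyMenger = fun d : Fin 4 → Fin 4 → ℝ => cayleyMenger d := rfl
  rw [h]
  conv in cayleyMenger _ => rw [cayleyMenger_eq]
  have hc : ∀ i j : Fin 4, Continuous fun d : Fin 4 → Fin 4 → ℝ => d i j := fun i j =>
    (continuous_apply j).comp (continuous_apply i)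
  fun_prop

lemma cayleyMenger_nonneg {H : Type*} [NormedAddCommGroup H] [InnerProductSpace ℝ H]
    (x : Fin 4 → H) : 0 ≤ cayleyMenger (fun i j => dist (x i) (x j)) := by
  set g : Fin 4 → Fin 4 → ℝ := fun i j => inner ℝ (x i - x 0) (x j - x 0) with hg
  have hd : ∀ i j : Fin 4, dist (x i) (x j) ^ 2 = g i i - 2 * g i j + g j j := by
    intro i j
    have h1 : x i - x j = (x i - x 0) - (x j - x 0) := by abel
    rw [dist_eq_norm, h1, norm_sub_sq_real, hg]
    simp only [real_inner_self_eq_norm_sq]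
  set G : Matrix (Fin 3) (Fin 3) ℝ := Matrix.of (fun i j => g i.succ j.succ) with hG
  have hPSD : G.PosSemidef := by
    refine Matrix.PosSemidef.of_dotProduct_mulVec_nonneg ?_ ?_
    · ext i j
      simp only [hG, Matrix.conjTranspose_apply, Matrix.of_apply, star_trivial, hg]
      exact real_inner_comm _ _
    · intro y
      have h2 : dotProduct (star y) (G.mulVec y) =
          inner (𝕜 := ℝ) (∑ i, y i • (x i.succ - x 0)) (∑ j, y j • (x j.succ - x 0)) := by
        rw [sum_inner]
        simp only [dotProduct, Matrix.mulVec, star_trivial, hG,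
          Matrix.of_apply, hg, real_inner_smul_left, inner_sum, real_inner_smul_right,
          Finset.mul_sum]
        refine Finset.sum_congr rfl fun i _ => Finset.sum_congr rfl fun j _ => by ring
      rw [h2]
      exact real_inner_self_nonneg
  have hdet : 0 ≤ G.det := by
    rw [hPSD.1.det_eq_prod_eigenvalues]
    refine Finset.prod_nonneg fun i _ => ?_
    simpa using hPSD.eigenvalues_nonneg i
  have key : cayleyMenger (fun i j => dist (x i) (x j)) = G.det / 36 := by
    have h0 : ∀ j, g 0 j = 0 := fun j => by simp [hg]
    have h10 : g 1 0 = 0 := by simp [hg]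
    have h20 : g 2 0 = 0 := by simp [hg]
    have h30 : g 3 0 = 0 := by simp [hg]
    have h21 : g 2 1 = g 1 2 := real_inner_comm _ _
    have h31 : g 3 1 = g 1 3 := real_inner_comm _ _
    have h32 : g 3 2 = g 2 3 := real_inner_comm _ _
    have e1 : (Fin.succ 0 : Fin 4) = 1 := rfl
    have e2 : (Fin.succ 1 : Fin 4) = 2 := rfl
    have e3 : (Fin.succ 2 : Fin 4) = 3 := rfl
    rw [cayleyMenger_eq, hG, Matrix.det_fin_three]
    simp only [Matrix.of_apply, e1, e2, e3]
    simp only [hd, h0, h10, h20, h30, h21, h31, h32]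
    ring
  rw [key]
  positivity

noncomputable def triW (δ : ℝ) : Fin 4 → Fin 3 → ℝ :=
  ![![0,0,0], ![δ,-δ,-δ], ![-δ,δ,-δ], ![-δ,-δ,δ]]

noncomputable def triM : Fin 4 → Fin 4 → ℝ := ![![0,1,1,1],![1,0,2,2],![1,2,0,2],![1,2,2,0]]

private lemma le_abs_helper {c e : ℝ} (h : c ≤ e ∨ c ≤ -e) : c ≤ |e| :=
  h.elim (fun h => h.trans (le_abs_self _)) (fun h => h.trans (neg_le_abs _))

set_option linter.unreachableTactic false in
set_option linter.unusedTactic false in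
lemma dist_triW {δ : ℝ} (hδ : 0 ≤ δ) (i j : Fin 4) :
    dist (triW δ i) (triW δ j) = δ * triM i j := by
  fin_cases i <;> fin_cases j <;>
  · refine le_antisymm ((dist_pi_le_iff ?_).2 fun k => ?_) ?_
    · norm_num [triM] <;> try linarith
    · fin_cases k <;> (rw [Real.dist_eq]; refine abs_le.2 ⟨?_, ?_⟩ <;>
        norm_num [triW, triM, Matrix.vecHead, Matrix.vecTail] <;> try linarith)
    · first
      | (norm_num [triM]; positivity)
      | (refine le_trans ?_ (dist_le_pi_dist _ _ 0); rw [Real.dist_eq]; apply le_abs_helper;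
         simp [triW, triM, Matrix.vecHead, Matrix.vecTail];
         all_goals (first | (left; linarith) | (right; linarith) | linarith))
      | (refine le_trans ?_ (dist_le_pi_dist _ _ 1); rw [Real.dist_eq]; apply le_abs_helper;
         simp [triW, triM, Matrix.vecHead, Matrix.vecTail];
         all_goals (first | (left; linarith) | (right; linarith) | linarith))
      | (refine le_trans ?_ (dist_le_pi_dist _ _ 2); rw [Real.dist_eq]; apply le_abs_helper;
         simp [triW, triM, Matrix.vecHead, Matrix.vecTail];
         all_goals (first | (left; linarith) | (right; linarith) | linarith))

lemma triM_nonneg (i j : Fin 4) : 0 ≤ triM i j := by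
  fin_cases i <;> fin_cases j <;> norm_num [triM, Matrix.vecHead, Matrix.vecTail]

lemma triM_le_one_left (i : Fin 4) : triM i 0 ≤ 1 := by
  fin_cases i <;> norm_num [triM, Matrix.vecHead, Matrix.vecTail]

lemma triM_pos_of_ne {i j : Fin 4} (h : i ≠ j) : 1 ≤ triM i j := by
  fin_cases i <;> fin_cases j <;>
    first
      | (exact absurd rfl h)
      | norm_num [triM, Matrix.vecHead, Matrix.vecTail]

lemma cayleyMenger_triM {δ : ℝ} (hδ : 0 < δ) :
    cayleyMenger (fun i j => δ * triM i j) < 0 := by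
  rw [cayleyMenger_eq]
  simp [triM]
  ring_nf
  nlinarith [pow_pos hδ 6]

/-- The set of compact metric spaces containing four points with negative Cayley–Menger
determinant is open and dense; consequently, a generic compact metric space embeds
isometrically into no Hilbert space. -/
theorem isOpen_dense_negative_cayleyMenger_and_residual_no_hilbert_embedding :
    (IsOpen {p : GHSpace | ∃ a : Fin 4 → p.Rep, Function.Injective a ∧
        cayleyMenger (fun i j => dist (a i) (a j)) < 0} ∧
      Dense {p : GHSpace | ∃ a : Fin 4 → p.Rep, Function.Injective a ∧
        cayleyMenger (fun i j => dist (a i) (a j)) < 0}) ∧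
    {p : GHSpace | ∀ (H : Type) [NormedAddCommGroup H] [InnerProductSpace ℝ H]
        [CompleteSpace H], ¬∃ f : p.Rep → H, Isometry f} ∈ residual GHSpace := by
  classical
  set S : Set GHSpace := {p : GHSpace | ∃ a : Fin 4 → p.Rep, Function.Injective a ∧
      cayleyMenger (fun i j => dist (a i) (a j)) < 0} with hS
  have hopen : IsOpen S := by
    rw [Metric.isOpen_iff]
    rintro p ⟨a, ha, hcm⟩
    set d : Fin 4 → Fin 4 → ℝ := fun i j => dist (a i) (a j) with hd
    obtain ⟨η, hη, hcont⟩ := Metric.continuousAt_iff.1 continuous_cayleyMenger.continuousAt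
      (-cayleyMenger d) (by linarith)
    obtain ⟨q0, hq0mem, hq0min⟩ := Finset.exists_min_image
      (Finset.univ.filter fun q : Fin 4 × Fin 4 => q.1 ≠ q.2) (fun q => d q.1 q.2)
      ⟨(0, 1), by simp⟩
    set m := d q0.1 q0.2 with hm
    have hq0ne : q0.1 ≠ q0.2 := (Finset.mem_filter.1 hq0mem).2
    have hm0 : 0 < m := dist_pos.2 fun h => hq0ne (ha h)
    have hmle : ∀ i j : Fin 4, i ≠ j → m ≤ d i j := fun i j hij =>
      hq0min (i, j) (by simp [hij])
    set ε := min (η / 3) (m / 3) with hε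
    have hε0 : 0 < ε := lt_min (by linarith) (by linarith)
    refine ⟨ε, hε0, fun q hq => ?_⟩
    have hdist : ghDist p.Rep q.Rep < ε := by
      rw [← dist_ghDist]
      rw [Metric.mem_ball, dist_comm] at hq
      exact hq
    have hH : Metric.hausdorffDist (Set.range (optimalGHInjl p.Rep q.Rep))
        (Set.range (optimalGHInjr p.Rep q.Rep)) < ε := by
      rwa [hausdorffDist_optimal]
    have hfin : EMetric.hausdorffEdist (Set.range (optimalGHInjl p.Rep q.Rep))
        (Set.range (optimalGHInjr p.Rep q.Rep)) ≠ ⊤ :=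
      Metric.hausdorffEdist_ne_top_of_nonempty_of_bounded (Set.range_nonempty _)
        (Set.range_nonempty _)
        (isCompact_range (isometry_optimalGHInjl p.Rep q.Rep).continuous).isBounded
        (isCompact_range (isometry_optimalGHInjr p.Rep q.Rep).continuous).isBounded
    have hex : ∀ i : Fin 4, ∃ y : q.Rep, dist (optimalGHInjl p.Rep q.Rep (a i)) (optimalGHInjr p.Rep q.Rep y) < ε := by
      intro i
      obtain ⟨z, hz, hzd⟩ :=
        Metric.exists_dist_lt_of_hausdorffDist_lt (Set.mem_range_self (a i)) hH hfin
      obtain ⟨y, rfl⟩ := hz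
      exact ⟨y, hzd⟩
    choose b hb using hex
    set d' : Fin 4 → Fin 4 → ℝ := fun i j => dist (b i) (b j) with hd'
    have hclose : ∀ i j, |d' i j - d i j| < 2 * ε := by
      intro i j
      have h1 : d' i j = dist (optimalGHInjr p.Rep q.Rep (b i)) (optimalGHInjr p.Rep q.Rep (b j)) := by
        simp only [hd']
        exact ((isometry_optimalGHInjr p.Rep q.Rep).dist_eq _ _).symm
      have h2 : d i j = dist (optimalGHInjl p.Rep q.Rep (a i)) (optimalGHInjl p.Rep q.Rep (a j)) := by
        simp only [hd]
        exact ((isometry_optimalGHInjl p.Rep q.Rep).dist_eq _ _).symm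
      rw [h1, h2, ← Real.dist_eq]
      refine lt_of_le_of_lt (dist_dist_dist_le _ _ _ _) ?_
      have hbi := hb i
      have hbj := hb j
      rw [dist_comm] at hbi hbj
      linarith
    have hb_inj : Function.Injective b := by
      intro i j hbij
      by_contra hne
      have h1 : m ≤ d i j := hmle i j hne
      have h2 := hclose i j
      have h3 : d' i j = 0 := by rw [hd']; simp [hbij]
      have h4 : ε ≤ m / 3 := min_le_right _ _
      rw [h3, zero_sub, abs_neg, abs_of_nonneg (show (0:ℝ) ≤ d i j from dist_nonneg)] at h2
      linarith
    have hcm' : cayleyMenger d' < 0 := by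
      have hdd : dist d' d < η := by
        have hle : dist d' d ≤ 2 * ε := by
          refine (dist_pi_le_iff (by linarith)).2 fun i => ?_
          refine (dist_pi_le_iff (by linarith)).2 fun j => ?_
          rw [Real.dist_eq]
          exact (hclose i j).le
        have : ε ≤ η / 3 := min_le_left _ _
        linarith
      have := hcont hdd
      rw [Real.dist_eq] at this
      have habs := abs_lt.1 this
      linarith [habs.1, habs.2]
    exact ⟨b, hb_inj, hcm'⟩
  have hdense : Dense S := by
    rw [Metric.dense_iff]
    intro p r hr
    set δ := r / 2 with hδdef
    have hδ0 : 0 < δ := by linarith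
    have x0 : p.Rep := Nonempty.some inferInstance
    set Φ : p.Rep → p.Rep × (Fin 3 → ℝ) := fun x => (x, triW δ 0) with hΦdef
    have hΦ : Isometry Φ := Isometry.of_dist_eq fun x y => by
      simp only [hΦdef, Prod.dist_eq, dist_self]
      exact max_eq_left dist_nonneg
    set y : Fin 4 → p.Rep × (Fin 3 → ℝ) := fun i => (x0, triW δ i) with hydef
    have hy : ∀ i j, dist (y i) (y j) = δ * triM i j := by
      intro i j
      simp only [hydef, Prod.dist_eq, dist_self]
      rw [dist_triW hδ0.le]
      exact max_eq_right (mul_nonneg hδ0.le (triM_nonneg i j))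
    set Y : Set (p.Rep × (Fin 3 → ℝ)) := Set.range Φ ∪ Set.range y with hYdef
    have hYc : IsCompact Y := (isCompact_range hΦ.continuous).union (Set.finite_range y).isCompact
    haveI : CompactSpace Y := isCompact_iff_compactSpace.1 hYc
    haveI : Nonempty Y := ⟨⟨Φ x0, Or.inl (Set.mem_range_self _)⟩⟩
    set q := toGHSpace ↥Y with hq
    have hqp : dist p q ≤ δ := by
      have h0 : dist p q = ghDist p.Rep ↥Y := by
        rw [dist_ghDist p q]
        show dist (toGHSpace p.Rep) (toGHSpace q.Rep) = dist (toGHSpace p.Rep) (toGHSpace ↥Y)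
        rw [q.toGHSpace_rep, hq]
      rw [h0]
      refine le_trans (ghDist_le_hausdorffDist hΦ isometry_subtype_coe) ?_
      rw [Subtype.range_coe]
      apply Metric.hausdorffDist_le_of_mem_dist hδ0.le
      · intro z hz
        exact ⟨z, Or.inl hz, by simp only [dist_self]; linarith⟩
      · rintro z (hz | ⟨i, rfl⟩)
        · exact ⟨z, hz, by simp only [dist_self]; linarith⟩
        · refine ⟨Φ x0, Set.mem_range_self _, ?_⟩
          have hΦy : Φ x0 = y 0 := rfl
          rw [hΦy, hy i 0]
          nlinarith [triM_le_one_left i, hδ0.le]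
    have hqS : q ∈ S := by
      have he : Nonempty (q.Rep ≃ᵢ ↥Y) := by
        rw [← toGHSpace_eq_toGHSpace_iff_isometryEquiv, q.toGHSpace_rep]
      obtain ⟨e⟩ := he
      set a : Fin 4 → q.Rep := fun i => e.symm ⟨y i, Or.inr (Set.mem_range_self i)⟩ with hadef
      have hay : ∀ i j, dist (a i) (a j) = δ * triM i j := by
        intro i j
        rw [hadef]
        simp only
        rw [IsometryEquiv.dist_eq, Subtype.dist_eq]
        exact hy i j
      refine ⟨a, ?_, ?_⟩
      · intro i j hij
        by_contra hne
        have h1 := hay i j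
        rw [hij, dist_self] at h1
        have h2 := triM_pos_of_ne hne
        nlinarith
      · have hfun : (fun i j => dist (a i) (a j)) = fun i j => δ * triM i j := by
          funext i j; exact hay i j
        rw [hfun]
        exact cayleyMenger_triM hδ0
    refine ⟨q, Metric.mem_ball.2 ?_, hqS⟩
    rw [dist_comm]
    exact lt_of_le_of_lt hqp (by linarith)
  refine ⟨⟨hopen, hdense⟩, ?_⟩
  rw [mem_residual]
  refine ⟨S, ?_, hopen.isGδ, hdense⟩
  rintro p ⟨a, ha, hcm⟩ H _ _ _ ⟨f, hf⟩
  have hnn := cayleyMenger_nonneg (fun i => f (a i))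
  have heq : (fun i j => dist (f (a i)) (f (a j))) = fun i j => dist (a i) (a j) := by
    funext i j; exact hf.dist_eq _ _
  rw [heq] at hnn
  linarith
end

section
/- A generic compact metric space has lower box dimension equal to zero and upper box dimension equal to infinity; that is, the set of compact metric spaces X with dim_B(X) = 0 and dim^B(X) = ∞ is residual in the Gromov-Hausdorff space. -/
open GromovHausdorff Filter Metric Set

/-- `coveringNumber X ε` : the minimal number of closed balls of radius `ε` needed to cover `X`. -/
noncomputable def coveringNumber (X : Type*) [MetricSpace X] (ε : ℝ) : ℕ :=
  sInf {n : ℕ | ∃ F : Finset X, F.card = n ∧ ∀ x : X, ∃ y ∈ F, dist x y ≤ ε}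

/-- The lower box dimension of a compact metric space, as an extended real. -/
noncomputable def lowerBoxDim (X : Type*) [MetricSpace X] : EReal :=
  liminf (fun ε : ℝ => ((Real.log (coveringNumber X ε) / Real.log (1 / ε) : ℝ) : EReal))
    (nhdsWithin 0 (Set.Ioi 0))

/-- The upper box dimension of a compact metric space, as an extended real. -/
noncomputable def upperBoxDim (X : Type*) [MetricSpace X] : EReal :=
  limsup (fun ε : ℝ => ((Real.log (coveringNumber X ε) / Real.log (1 / ε) : ℝ) : EReal))
    (nhdsWithin 0 (Set.Ioi 0))

section helpers


variable {X : Type*} [MetricSpace X]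

lemma covSet_nonempty [CompactSpace X] {ε : ℝ} (hε : 0 < ε) :
    {n : ℕ | ∃ F : Finset X, F.card = n ∧ ∀ x : X, ∃ y ∈ F, dist x y ≤ ε}.Nonempty := by
  obtain ⟨t, -, tfin, ht⟩ := finite_cover_balls_of_compact (isCompact_univ (X := X)) hε
  refine ⟨tfin.toFinset.card, tfin.toFinset, rfl, fun x => ?_⟩
  obtain ⟨y, hy, hxy⟩ := mem_iUnion₂.1 (ht (mem_univ x))
  exact ⟨y, tfin.mem_toFinset.2 hy, (mem_ball.1 hxy).le⟩

lemma coveringNumber_le_card {ε : ℝ} (F : Finset X) (h : ∀ x : X, ∃ y ∈ F, dist x y ≤ ε) :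
    coveringNumber X ε ≤ F.card := Nat.sInf_le ⟨F, rfl, h⟩

lemma coveringNumber_spec [CompactSpace X] {ε : ℝ} (hε : 0 < ε) :
    ∃ F : Finset X, F.card = coveringNumber X ε ∧ ∀ x : X, ∃ y ∈ F, dist x y ≤ ε := by
  have := Nat.sInf_mem (covSet_nonempty (X := X) hε)
  obtain ⟨F, hF, hc⟩ := this
  exact ⟨F, hF, hc⟩

lemma one_le_coveringNumber [CompactSpace X] [Nonempty X] {ε : ℝ} (hε : 0 < ε) :
    1 ≤ coveringNumber X ε := by
  obtain ⟨F, hcard, hF⟩ := coveringNumber_spec (X := X) hε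
  rcases hF (Classical.arbitrary X) with ⟨y, hy, -⟩
  rw [← hcard]
  exact Finset.card_pos.2 ⟨y, hy⟩

lemma log_nat_mono {a b : ℕ} (h : a ≤ b) : Real.log a ≤ Real.log b := by
  rcases Nat.eq_zero_or_pos a with rfl | ha
  · simpa using Real.log_natCast_nonneg b
  · exact Real.log_le_log (by exact_mod_cast ha) (by exact_mod_cast h)

lemma covset_mono {Y : Type*} [MetricSpace Y] (e : X ≃ᵢ Y) (ε : ℝ) :
    {n : ℕ | ∃ F : Finset X, F.card = n ∧ ∀ x : X, ∃ y ∈ F, dist x y ≤ ε} ⊆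
    {n : ℕ | ∃ F : Finset Y, F.card = n ∧ ∀ x : Y, ∃ y ∈ F, dist x y ≤ ε} := by
  classical
  rintro n ⟨F, rfl, hF⟩
  refine ⟨F.image e, Finset.card_image_of_injective _ e.injective, fun y => ?_⟩
  obtain ⟨z, hz, hd⟩ := hF (e.symm y)
  refine ⟨e z, Finset.mem_image_of_mem _ hz, ?_⟩
  have h1 : dist (e (e.symm y)) (e z) = dist (e.symm y) z := e.isometry.dist_eq _ _
  rw [e.apply_symm_apply] at h1
  rw [h1]; exact hd

lemma coveringNumber_congr {Y : Type*} [MetricSpace Y] (e : X ≃ᵢ Y) (ε : ℝ) :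
    coveringNumber X ε = coveringNumber Y ε := by
  unfold _root_.coveringNumber
  rw [subset_antisymm (covset_mono e ε) (covset_mono e.symm ε)]

lemma card_le_coveringNumber [Fintype X] {ε : ℝ} (hε : 0 ≤ ε)
    (hsep : ∀ x y : X, x ≠ y → 2 * ε < dist x y) :
    Fintype.card X ≤ coveringNumber X ε := by
  have hne : {n : ℕ | ∃ F : Finset X, F.card = n ∧ ∀ x : X, ∃ y ∈ F, dist x y ≤ ε}.Nonempty :=
    ⟨(Finset.univ : Finset X).card, Finset.univ, rfl,
      fun x => ⟨x, Finset.mem_univ x, by simp [hε]⟩⟩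
  obtain ⟨F, hcard, hF⟩ : ∃ F : Finset X, F.card = coveringNumber X ε ∧
      ∀ x : X, ∃ y ∈ F, dist x y ≤ ε := Nat.sInf_mem hne
  choose f hfmem hfd using hF
  rw [← hcard, ← Finset.card_univ]
  refine Finset.card_le_card_of_injOn f (fun a _ => hfmem a) ?_
  intro a _ b _ hab
  by_contra hne'
  have h1 : dist a b ≤ dist a (f a) + dist (f b) b := by
    rw [hab]; exact dist_triangle a (f b) b
  have h2 := hfd a
  have h3 := hfd b
  rw [dist_comm] at h3
  linarith [hsep a b hne']

end helpers

lemma coveringNumber_transfer {X Y : Type*} [MetricSpace X] [CompactSpace X] [Nonempty X]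
    [MetricSpace Y] [CompactSpace Y] [Nonempty Y] {δ ε : ℝ} (hε : 0 < ε)
    (h : ghDist X Y < δ) :
    coveringNumber X (ε + 2 * δ) ≤ coveringNumber Y ε := by
  classical
  have hΦ := isometry_optimalGHInjl X Y
  have hΨ := isometry_optimalGHInjr X Y
  set Φ := optimalGHInjl X Y
  set Ψ := optimalGHInjr X Y
  have hH : hausdorffDist (range Φ) (range Ψ) < δ := by
    rw [hausdorffDist_optimal]; exact h
  have hne : EMetric.hausdorffEdist (range Φ) (range Ψ) ≠ ⊤ :=
    Metric.hausdorffEdist_ne_top_of_nonempty_of_bounded (range_nonempty _) (range_nonempty _)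
      (isCompact_range hΦ.continuous).isBounded
      (isCompact_range hΨ.continuous).isBounded
  obtain ⟨F, hcard, hF⟩ := coveringNumber_spec (X := Y) hε
  have hg : ∀ y : Y, ∃ x : X, dist (Ψ y) (Φ x) < δ := by
    intro y
    obtain ⟨b, hb, hd⟩ := exists_dist_lt_of_hausdorffDist_lt' (mem_range_self y) hH hne
    obtain ⟨x, rfl⟩ := hb
    exact ⟨x, by rwa [dist_comm]⟩
  choose g hgd using hg
  have cover : ∀ x : X, ∃ y ∈ F.image g, dist x y ≤ ε + 2 * δ := by
    intro x
    obtain ⟨b, hb, hd⟩ := exists_dist_lt_of_hausdorffDist_lt (mem_range_self x) hH hne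
    obtain ⟨y, rfl⟩ := hb
    obtain ⟨f, hf, hyf⟩ := hF y
    refine ⟨g f, Finset.mem_image_of_mem _ hf, ?_⟩
    have h2 : dist (Ψ y) (Ψ f) ≤ ε := by rw [hΨ.dist_eq]; exact hyf
    have h3 : dist (Ψ f) (Φ (g f)) < δ := hgd f
    have h4 : dist (Φ x) (Φ (g f)) ≤ dist (Φ x) (Ψ y) + dist (Ψ y) (Ψ f) + dist (Ψ f) (Φ (g f)) :=
      dist_triangle4 _ _ _ _
    have : dist (Φ x) (Φ (g f)) ≤ ε + 2 * δ := by linarith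
    rwa [hΦ.dist_eq] at this
  calc coveringNumber X (ε + 2 * δ) ≤ (F.image g).card := coveringNumber_le_card _ cover
    _ ≤ F.card := Finset.card_image_le
    _ = coveringNumber Y ε := hcard

noncomputable def clusterMetric (α : Type*) [MetricSpace α] (M : ℕ) (sep : ℝ) (hsep : 0 < sep) :
    MetricSpace (α × Fin M) where
  dist p q := dist p.1 q.1 + (if p.2 = q.2 then 0 else sep)
  dist_self p := by simp
  dist_comm p q := by
    have : (if p.2 = q.2 then (0:ℝ) else sep) = if q.2 = p.2 then (0:ℝ) else sep := by
      by_cases h : p.2 = q.2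
      · rw [if_pos h, if_pos h.symm]
      · rw [if_neg h, if_neg (fun h' => h h'.symm)]
    rw [dist_comm, this]
  dist_triangle p q r := by
    have h1 : dist p.1 r.1 ≤ dist p.1 q.1 + dist q.1 r.1 := dist_triangle _ _ _
    have h2 : (if p.2 = r.2 then (0:ℝ) else sep) ≤
        (if p.2 = q.2 then (0:ℝ) else sep) + (if q.2 = r.2 then (0:ℝ) else sep) := by
      by_cases h : p.2 = r.2
      · simp only [h, if_pos rfl]
        positivity
      · rw [if_neg h]
        by_cases h' : p.2 = q.2
        · rw [if_pos h', if_neg (fun hq => h (h'.trans hq))]; linarith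
        · rw [if_neg h']
          have : (0:ℝ) ≤ if q.2 = r.2 then (0:ℝ) else sep := by positivity
          linarith
    linarith
  eq_of_dist_eq_zero := by
    rintro ⟨a, i⟩ ⟨b, j⟩ h
    dsimp only at h
    have hd : (0:ℝ) ≤ dist a b := dist_nonneg
    have hi : (0:ℝ) ≤ if i = j then (0:ℝ) else sep := by positivity
    have hab : dist a b = 0 := by
      by_contra hab
      have := lt_of_le_of_ne hd (Ne.symm hab)
      linarith
    have hij : i = j := by
      by_contra hij
      rw [if_neg hij] at h hi
      linarith
    ext
    · exact eq_of_dist_eq_zero hab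
    · rw [hij]


def lowSet (k : ℕ) : Set GHSpace :=
  {p | ∃ ε : ℝ, 0 < ε ∧ ε < 1/(k+1) ∧
    Real.log (coveringNumber p.Rep ε) / Real.log (1/ε) < 1/(k+1)}

def hiSet (k : ℕ) : Set GHSpace :=
  {p | ∃ ε : ℝ, 0 < ε ∧ ε < 1/(k+1) ∧
    (k : ℝ) < Real.log (coveringNumber p.Rep ε) / Real.log (1/ε)}

lemma aux_cont (n : ℕ) {ε : ℝ} (hε0 : 0 < ε) (hε1 : ε < 1) :
    ContinuousAt (fun t : ℝ => Real.log n / Real.log (1/t)) ε := by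
  have heq : (fun t : ℝ => Real.log n / Real.log (1/t)) =
      fun t : ℝ => Real.log n / (-Real.log t) := by
    funext t; rw [one_div, Real.log_inv]
  rw [heq]
  have hne : -Real.log ε ≠ 0 := by
    have := Real.log_neg hε0 hε1; linarith
  exact continuousAt_const.div ((Real.continuousAt_log hε0.ne').neg) hne

lemma kfrac_pos (k : ℕ) : (0:ℝ) < 1/(k+1) := by positivity
lemma kfrac_le_one (k : ℕ) : (1:ℝ)/(k+1) ≤ 1 := by
  rw [div_le_one (by positivity)]
  exact le_add_of_nonneg_left (Nat.cast_nonneg k)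

lemma div_le_div_of_nonneg {a b c : ℝ} (h : a ≤ b) (hc : 0 ≤ c) (hc' : 0 < c) :
    a / c ≤ b / c := by
  gcongr

lemma isOpen_lowSet (k : ℕ) : IsOpen (lowSet k) := by
  rw [Metric.isOpen_iff]
  rintro p ⟨ε, hε0, hεc, hlt⟩
  have hε1 : ε < 1 := lt_of_lt_of_le hεc (kfrac_le_one k)
  set n := coveringNumber p.Rep ε with hn
  have hev : ∀ᶠ t in nhds ε, Real.log n / Real.log (1/t) < 1/(k+1) :=
    (aux_cont n hε0 hε1).eventually_lt continuousAt_const hlt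
  obtain ⟨δ, hδ0, hδ⟩ := Metric.eventually_nhds_iff.1 hev
  set ε' := ε + min δ (1/(k+1) - ε) / 2 with hε'
  have hmin : 0 < min δ (1/(k+1) - ε) := lt_min hδ0 (by linarith)
  have hεε' : ε < ε' := by rw [hε']; linarith
  have hε'c : ε' < 1/(k+1) := by
    have := min_le_right δ (1/(k+1) - ε); rw [hε']; linarith
  have hε'g : Real.log n / Real.log (1/ε') < 1/(k+1) := by
    apply hδ
    rw [Real.dist_eq, abs_lt]
    have := min_le_left δ (1/(k+1) - ε)
    constructor <;> [skip; skip] <;> rw [hε'] <;> linarith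
  refine ⟨(ε' - ε)/2, by linarith, fun q hq => ?_⟩
  rw [mem_ball, dist_comm] at hq
  have hgh : ghDist q.Rep p.Rep < (ε' - ε)/2 := by
    rw [← dist_ghDist, dist_comm]; exact hq
  have htr : coveringNumber q.Rep (ε + 2 * ((ε' - ε)/2)) ≤ n :=
    coveringNumber_transfer hε0 hgh
  have he : ε + 2 * ((ε' - ε)/2) = ε' := by ring
  rw [he] at htr
  refine ⟨ε', by linarith, hε'c, ?_⟩
  have hden : 0 < Real.log (1/ε') := Real.log_pos (by
    rw [lt_div_iff₀ (by linarith)]; linarith [lt_of_lt_of_le hε'c (kfrac_le_one k)])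
  calc Real.log (coveringNumber q.Rep ε') / Real.log (1/ε')
      ≤ Real.log n / Real.log (1/ε') :=
        div_le_div_of_nonneg (log_nat_mono htr) hden.le hden
      _ < 1/(k+1) := hε'g

lemma isOpen_hiSet (k : ℕ) : IsOpen (hiSet k) := by
  rw [Metric.isOpen_iff]
  rintro p ⟨ε, hε0, hεc, hlt⟩
  have hε1 : ε < 1 := lt_of_lt_of_le hεc (kfrac_le_one k)
  set n := coveringNumber p.Rep ε with hn
  have hev : ∀ᶠ t in nhds ε, (k:ℝ) < Real.log n / Real.log (1/t) :=
    continuousAt_const.eventually_lt (aux_cont n hε0 hε1) hlt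
  obtain ⟨δ, hδ0, hδ⟩ := Metric.eventually_nhds_iff.1 hev
  set ε'' := ε - min δ ε / 2 with hε''
  have hmin : 0 < min δ ε := lt_min hδ0 hε0
  have h1 : ε'' < ε := by rw [hε'']; linarith
  have h0 : 0 < ε'' := by
    have := min_le_right δ ε; rw [hε'']; linarith
  have hg : (k:ℝ) < Real.log n / Real.log (1/ε'') := by
    apply hδ
    rw [Real.dist_eq, abs_lt]
    have := min_le_left δ ε
    constructor <;> rw [hε''] <;> linarith
  refine ⟨(ε - ε'')/2, by linarith, fun q hq => ?_⟩
  rw [mem_ball, dist_comm] at hq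
  have hgh : ghDist p.Rep q.Rep < (ε - ε'')/2 := by rw [← dist_ghDist]; exact hq
  have htr : coveringNumber p.Rep (ε'' + 2 * ((ε - ε'')/2)) ≤ coveringNumber q.Rep ε'' :=
    coveringNumber_transfer h0 hgh
  have he : ε'' + 2 * ((ε - ε'')/2) = ε := by ring
  rw [he] at htr
  refine ⟨ε'', h0, by linarith, ?_⟩
  have hden : 0 < Real.log (1/ε'') := Real.log_pos (by
    rw [lt_div_iff₀ h0]; linarith)
  calc (k:ℝ) < Real.log n / Real.log (1/ε'') := hg
    _ ≤ Real.log (coveringNumber q.Rep ε'') / Real.log (1/ε'') :=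
        div_le_div_of_nonneg (log_nat_mono htr) hden.le hden


lemma exists_net (X : Type*) [MetricSpace X] [CompactSpace X] [Nonempty X] {r : ℝ}
    (hr : 0 < r) : ∃ F : Finset X, F.Nonempty ∧ ∀ x : X, ∃ y ∈ F, dist x y ≤ r := by
  obtain ⟨t, -, tfin, ht⟩ := finite_cover_balls_of_compact (isCompact_univ (X := X)) hr
  have cover : ∀ x : X, ∃ y ∈ tfin.toFinset, dist x y ≤ r := by
    intro x
    obtain ⟨y, hy, hxy⟩ := mem_iUnion₂.1 (ht (mem_univ x))
    exact ⟨y, tfin.mem_toFinset.2 hy, (mem_ball.1 hxy).le⟩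
  obtain ⟨y, hy, -⟩ := cover (Classical.arbitrary X)
  exact ⟨tfin.toFinset, ⟨y, hy⟩, cover⟩

lemma ghDist_le_of_net {X : Type*} [MetricSpace X] [CompactSpace X] [Nonempty X]
    (F : Finset X) [Nonempty {x // x ∈ F}] {r : ℝ} (hr : 0 ≤ r)
    (h : ∀ x : X, ∃ y ∈ F, dist x y ≤ r) : ghDist X {x // x ∈ F} ≤ r := by
  have hval : Isometry (Subtype.val : {x // x ∈ F} → X) := fun _ _ => rfl
  refine le_trans (ghDist_le_hausdorffDist (isometry_id (α := X)) hval) ?_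
  rw [range_id, Subtype.range_coe_subtype]
  apply hausdorffDist_le_of_mem_dist hr
  · intro x _
    obtain ⟨y, hy, hxy⟩ := h x
    exact ⟨y, hy, hxy⟩
  · intro y hy
    exact ⟨y, mem_univ y, by simpa using hr⟩

lemma ghDist_toGHSpace (X Y : Type*) [MetricSpace X] [CompactSpace X] [Nonempty X]
    [MetricSpace Y] [CompactSpace Y] [Nonempty Y] :
    dist (toGHSpace X) (toGHSpace Y) = ghDist X Y := rfl

lemma rep_isometryEquiv (Y : Type*) [MetricSpace Y] [CompactSpace Y] [Nonempty Y] :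
    Nonempty ((toGHSpace Y).Rep ≃ᵢ Y) := by
  rw [← toGHSpace_eq_toGHSpace_iff_isometryEquiv]
  exact (toGHSpace Y).toGHSpace_rep

lemma dense_lowSet (k : ℕ) : Dense (lowSet k) := by
  rw [Metric.dense_iff]
  intro p r hr
  set X := p.Rep
  obtain ⟨F, hFne, hFcov⟩ := exists_net X (half_pos hr)
  haveI : Nonempty {x // x ∈ F} := ⟨⟨hFne.choose, hFne.choose_spec⟩⟩
  set Y := {x // x ∈ F}
  set q := toGHSpace Y with hq
  have hdist : dist p q < r := by
    have : dist p q = ghDist X Y := by rw [← ghDist_toGHSpace, p.toGHSpace_rep]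
    rw [this]
    calc ghDist X Y ≤ r/2 := ghDist_le_of_net F (half_pos hr).le hFcov
      _ < r := half_lt_self hr
  obtain ⟨e⟩ := rep_isometryEquiv Y
  refine ⟨q, mem_ball'.2 hdist, ?_⟩
  set m := Fintype.card Y with hm
  have hm1 : 1 ≤ m := Fintype.card_pos
  set ε' := min (1/(2*((k:ℝ)+1))) (Real.exp (-(((k:ℝ)+1) * Real.log m + 1))) with hε'
  have hε'0 : 0 < ε' := lt_min (by positivity) (Real.exp_pos _)
  have hε'c : ε' < 1/((k:ℝ)+1) := by
    refine lt_of_le_of_lt (min_le_left _ _) ?_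
    rw [div_lt_div_iff₀ (by positivity) (by positivity)]
    nlinarith [Nat.cast_nonneg (α := ℝ) k]
  have hcov : coveringNumber Y ε' ≤ m := by
    rw [hm, ← Finset.card_univ]
    exact coveringNumber_le_card Finset.univ (fun x => ⟨x, Finset.mem_univ x, by simp [hε'0.le]⟩)
  have hlogm : 0 ≤ Real.log m := Real.log_natCast_nonneg m
  have hlog : ((k:ℝ)+1) * Real.log m + 1 ≤ Real.log (1/ε') := by
    rw [one_div, Real.log_inv]
    have : Real.log ε' ≤ -(((k:ℝ)+1) * Real.log m + 1) := by
      calc Real.log ε' ≤ Real.log (Real.exp (-(((k:ℝ)+1) * Real.log m + 1))) :=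
            Real.log_le_log hε'0 (min_le_right _ _)
        _ = -(((k:ℝ)+1) * Real.log m + 1) := Real.log_exp _
    linarith
  have hden : 0 < Real.log (1/ε') := by nlinarith
  refine ⟨ε', hε'0, by exact_mod_cast hε'c, ?_⟩
  have hN : Real.log (coveringNumber q.Rep ε') ≤ Real.log m := by
    rw [coveringNumber_congr e ε']
    exact log_nat_mono hcov
  have hNnn : 0 ≤ Real.log (coveringNumber q.Rep ε') := Real.log_natCast_nonneg _
  rw [div_lt_div_iff₀ hden (by positivity)]
  push_cast
  nlinarith [mul_le_mul_of_nonneg_right hN (by positivity : (0:ℝ) ≤ (k:ℝ)+1)]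

lemma dense_hiSet (k : ℕ) : Dense (hiSet k) := by
  classical
  rw [Metric.dense_iff]
  intro p r hr
  set X := p.Rep
  obtain ⟨F, hFne, hFcov⟩ := exists_net X (by positivity : (0:ℝ) < r/4)
  haveI : Nonempty {x // x ∈ F} := ⟨⟨hFne.choose, hFne.choose_spec⟩⟩
  set Y₀ := {x // x ∈ F}
  -- minimal separation of Y₀
  set D : Finset ℝ := ((Finset.univ ×ˢ Finset.univ : Finset (Y₀ × Y₀)).filter
      fun pq => pq.1 ≠ pq.2).image fun pq => dist pq.1 pq.2 with hD
  set minF := if h : D.Nonempty then D.min' h else 1 with hminF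
  have hminF0 : 0 < minF := by
    rw [hminF]
    split_ifs with h
    · obtain ⟨pq, hpq, hdq⟩ := Finset.mem_image.1 (D.min'_mem h)
      rw [← hdq]
      exact dist_pos.2 (Finset.mem_filter.1 hpq).2
    · norm_num
  have hminF_le : ∀ a b : Y₀, a ≠ b → minF ≤ dist a b := by
    intro a b hab
    have hmem : dist a b ∈ D := Finset.mem_image.2
      ⟨(a, b), Finset.mem_filter.2 ⟨Finset.mem_product.2 ⟨Finset.mem_univ _, Finset.mem_univ _⟩, hab⟩, rfl⟩
    rw [hminF, dif_pos ⟨_, hmem⟩]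
    exact Finset.min'_le _ _ hmem
  set sep := min (r/4) 1 with hsep
  have hsep0 : 0 < sep := lt_min (by positivity) one_pos
  set ε := min (min sep minF) (1/((k:ℝ)+1)) / 3 with hε
  have hε0 : 0 < ε := by
    apply div_pos _ (by norm_num)
    exact lt_min (lt_min hsep0 hminF0) (by positivity)
  have hεsep : 2 * ε < sep := by
    have h1 : ε ≤ sep / 3 := by
      rw [hε]; gcongr; exact (min_le_left _ _).trans (min_le_left _ _)
    linarith
  have hεminF : 2 * ε < minF := by
    have h1 : ε ≤ minF / 3 := by
      rw [hε]; gcongr; exact (min_le_left _ _).trans (min_le_right _ _)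
    linarith
  have hεk : ε < 1/((k:ℝ)+1) := by
    have h1 : ε ≤ (1/((k:ℝ)+1)) / 3 := by rw [hε]; gcongr; exact min_le_right _ _
    have := kfrac_pos k
    push_cast at this ⊢
    linarith
  have hε1 : ε < 1 := by
    have h1 : ε ≤ sep / 3 := by
      rw [hε]; gcongr; exact (min_le_left _ _).trans (min_le_left _ _)
    have h2 : sep ≤ 1 := min_le_right _ _
    linarith
  obtain ⟨M, hM⟩ := exists_nat_gt (Real.exp ((k:ℝ) * Real.log (1/ε)))
  have hM1 : 0 < M := by
    have : (0:ℝ) < M := (Real.exp_pos _).trans hM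
    exact_mod_cast this
  letI : MetricSpace (Y₀ × Fin M) := clusterMetric Y₀ M sep hsep0
  haveI : Nonempty (Fin M) := ⟨⟨0, hM1⟩⟩
  set q := toGHSpace (Y₀ × Fin M) with hq
  -- distance bound
  have hgh0 : ghDist Y₀ (Y₀ × Fin M) ≤ sep := by
    have hι : Isometry (fun a : Y₀ => ((a, ⟨0, hM1⟩) : Y₀ × Fin M)) := by
      apply Isometry.of_dist_eq
      intro a b
      show dist a b + (if (⟨0, hM1⟩ : Fin M) = ⟨0, hM1⟩ then (0:ℝ) else sep) = dist a b
      rw [if_pos rfl, add_zero]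
    refine le_trans (ghDist_le_hausdorffDist hι (isometry_id (α := Y₀ × Fin M))) ?_
    rw [range_id]
    apply hausdorffDist_le_of_mem_dist hsep0.le
    · intro x _
      exact ⟨x, mem_univ x, by simp [hsep0.le]⟩
    · rintro ⟨a, i⟩ -
      refine ⟨(a, ⟨0, hM1⟩), mem_range_self a, ?_⟩
      show dist a a + (if i = (⟨0, hM1⟩ : Fin M) then (0:ℝ) else sep) ≤ sep
      simp only [dist_self, zero_add]
      split_ifs <;> simp [hsep0.le]
  have hdist : dist p q < r := by
    have h1 : dist p q = ghDist X (Y₀ × Fin M) := by rw [← ghDist_toGHSpace, p.toGHSpace_rep]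
    have h2 : ghDist X (Y₀ × Fin M) ≤ ghDist X Y₀ + ghDist Y₀ (Y₀ × Fin M) := by
      rw [← ghDist_toGHSpace, ← ghDist_toGHSpace, ← ghDist_toGHSpace]
      exact dist_triangle _ _ _
    have h3 : ghDist X Y₀ ≤ r/4 := ghDist_le_of_net F (by positivity) hFcov
    have h4 : sep ≤ r/4 := min_le_left _ _
    rw [h1]
    linarith
  obtain ⟨e⟩ := rep_isometryEquiv (Y₀ × Fin M)
  refine ⟨q, mem_ball'.2 hdist, ?_⟩
  -- separation
  have hsepY : ∀ a b : Y₀ × Fin M, a ≠ b → 2 * ε < dist a b := by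
    rintro ⟨a, i⟩ ⟨b, j⟩ hne
    show 2 * ε < dist a b + (if i = j then (0:ℝ) else sep)
    by_cases hab : a = b
    · subst hab
      have hij : i ≠ j := fun h => hne (by rw [h])
      rw [if_neg hij]
      simp only [dist_self, zero_add]
      exact hεsep
    · have h1 := hminF_le a b hab
      have h2 : (0:ℝ) ≤ if i = j then 0 else sep := by split_ifs <;> [rfl; exact hsep0.le]
      linarith
  have hcard : Fintype.card (Y₀ × Fin M) = F.card * M := by
    rw [Fintype.card_prod, Fintype.card_coe, Fintype.card_fin]
  have hcount : F.card * M ≤ coveringNumber (Y₀ × Fin M) ε := by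
    rw [← hcard]
    exact card_le_coveringNumber hε0.le hsepY
  have hMN : M ≤ coveringNumber (Y₀ × Fin M) ε := by
    refine le_trans ?_ hcount
    have : 1 ≤ F.card := Finset.card_pos.2 hFne
    nlinarith
  refine ⟨ε, hε0, by exact_mod_cast hεk, ?_⟩
  have hden : 0 < Real.log (1/ε) := Real.log_pos (one_lt_one_div hε0 hε1)
  rw [coveringNumber_congr e ε]
  rw [lt_div_iff₀ hden]
  calc (k:ℝ) * Real.log (1/ε) = Real.log (Real.exp ((k:ℝ) * Real.log (1/ε))) :=
        (Real.log_exp _).symm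
    _ < Real.log M := Real.log_lt_log (Real.exp_pos _) hM
    _ ≤ Real.log (coveringNumber (Y₀ × Fin M) ε) := log_nat_mono hMN


/-- A generic compact metric space has zero lower box dimension and infinite upper
box dimension. -/
theorem residual_lowerBoxDim_zero_upperBoxDim_top :
    {p : GHSpace | lowerBoxDim p.Rep = 0 ∧ upperBoxDim p.Rep = ⊤} ∈ residual GHSpace := by
  have hmem : ∀ k : ℕ, (lowSet k ∩ hiSet k) ∈ residual GHSpace := fun k =>
    inter_mem (residual_of_dense_open (isOpen_lowSet k) (dense_lowSet k))
      (residual_of_dense_open (isOpen_hiSet k) (dense_hiSet k))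
  refine mem_of_superset (countable_iInter_mem.2 hmem) ?_
  intro p hp
  rw [mem_iInter] at hp
  have hfreq_low : ∀ m : ℕ, ∃ᶠ ε in nhdsWithin (0:ℝ) (Set.Ioi 0),
      ((Real.log (coveringNumber p.Rep ε) / Real.log (1/ε) : ℝ) : EReal)
        ≤ ((1/((m:ℝ)+1) : ℝ) : EReal) := by
    intro m
    rw [frequently_iff]
    intro U hU
    obtain ⟨δ, hδ0, hδ⟩ := Metric.mem_nhdsWithin_iff.1 hU
    obtain ⟨J, hJ⟩ := exists_nat_one_div_lt hδ0
    obtain ⟨ε, hε0, hεlt, hεf⟩ := (hp (max m J)).1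
    have hcast : (1:ℝ)/(((max m J : ℕ) : ℝ) + 1) ≤ 1/((J:ℝ)+1) := by
      apply one_div_le_one_div_of_le (by positivity)
      have : (J:ℝ) ≤ ((max m J : ℕ):ℝ) := by exact_mod_cast Nat.le_max_right m J
      linarith
    have hcast2 : (1:ℝ)/(((max m J : ℕ) : ℝ) + 1) ≤ 1/((m:ℝ)+1) := by
      apply one_div_le_one_div_of_le (by positivity)
      have : (m:ℝ) ≤ ((max m J : ℕ):ℝ) := by exact_mod_cast Nat.le_max_left m J
      linarith
    refine ⟨ε, hδ ⟨?_, hε0⟩, ?_⟩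
    · rw [mem_ball, Real.dist_eq, sub_zero, abs_of_pos hε0]
      calc ε < 1/(((max m J : ℕ) : ℝ) + 1) := by exact_mod_cast hεlt
        _ ≤ 1/((J:ℝ)+1) := hcast
        _ < δ := hJ
    · apply EReal.coe_le_coe_iff.2
      refine le_of_lt ?_
      calc Real.log (coveringNumber p.Rep ε) / Real.log (1/ε)
          < 1/(((max m J : ℕ) : ℝ) + 1) := by exact_mod_cast hεf
        _ ≤ 1/((m:ℝ)+1) := hcast2
  have hfreq_hi : ∀ K : ℕ, ∃ᶠ ε in nhdsWithin (0:ℝ) (Set.Ioi 0),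
      ((K:ℝ) : EReal) ≤ ((Real.log (coveringNumber p.Rep ε) / Real.log (1/ε) : ℝ) : EReal) := by
    intro K
    rw [frequently_iff]
    intro U hU
    obtain ⟨δ, hδ0, hδ⟩ := Metric.mem_nhdsWithin_iff.1 hU
    obtain ⟨J, hJ⟩ := exists_nat_one_div_lt hδ0
    obtain ⟨ε, hε0, hεlt, hεf⟩ := (hp (max K J)).2
    refine ⟨ε, hδ ⟨?_, hε0⟩, ?_⟩
    · rw [mem_ball, Real.dist_eq, sub_zero, abs_of_pos hε0]
      calc ε < 1/(((max K J : ℕ) : ℝ) + 1) := by exact_mod_cast hεlt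
        _ ≤ 1/((J:ℝ)+1) := by
          apply one_div_le_one_div_of_le (by positivity)
          have : (J:ℝ) ≤ ((max K J : ℕ):ℝ) := by exact_mod_cast Nat.le_max_right K J
          linarith
        _ < δ := hJ
    · apply EReal.coe_le_coe_iff.2
      refine le_of_lt ?_
      calc (K:ℝ) ≤ ((max K J : ℕ):ℝ) := by exact_mod_cast Nat.le_max_left K J
        _ < Real.log (coveringNumber p.Rep ε) / Real.log (1/ε) := by exact_mod_cast hεf
  constructor
  · refine le_antisymm ?_ ?_
    · have key : ∀ m : ℕ, lowerBoxDim p.Rep ≤ ((1/((m:ℝ)+1) : ℝ) : EReal) := fun m =>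
        Filter.liminf_le_of_frequently_le' (hfreq_low m)
      by_contra h
      have hlt : (0:EReal) < lowerBoxDim p.Rep := not_le.1 h
      obtain ⟨c, hc1, hc2⟩ := EReal.exists_between_coe_real hlt
      have hc0 : (0:ℝ) < c := by
        rw [← EReal.coe_zero] at hc1
        exact_mod_cast hc1
      obtain ⟨m, hm⟩ := exists_nat_one_div_lt hc0
      have h1 : lowerBoxDim p.Rep ≤ ((1/((m:ℝ)+1) : ℝ) : EReal) := key m
      have h2 : ((1/((m:ℝ)+1) : ℝ) : EReal) < (c : EReal) := by exact_mod_cast hm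
      exact absurd (h1.trans_lt (h2.trans hc2)) (lt_irrefl _)
    · refine Filter.le_liminf_of_le (by isBoundedDefault) ?_
      filter_upwards [Ioo_mem_nhdsGT (zero_lt_one (α := ℝ))] with ε hε
      rw [← EReal.coe_zero, EReal.coe_le_coe_iff]
      apply div_nonneg (Real.log_natCast_nonneg _)
      apply Real.log_nonneg
      rw [le_div_iff₀ hε.1, one_mul]
      exact hε.2.le
  · have key : ∀ K : ℕ, ((K:ℝ):EReal) ≤ upperBoxDim p.Rep := fun K =>
      Filter.le_limsup_of_frequently_le' (hfreq_hi K)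
    by_contra h
    have hlt : upperBoxDim p.Rep < ⊤ := Ne.lt_top h
    obtain ⟨c, hc1, hc2⟩ := EReal.exists_between_coe_real hlt
    obtain ⟨n, hn⟩ := exists_nat_gt c
    have h1 := key n
    have h2 : (c : EReal) < ((n:ℝ) : EReal) := by exact_mod_cast hn
    exact absurd ((h1.trans_lt hc1).trans h2) (lt_irrefl _)
end
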